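/- Let A = diag(A₁, 0_{q+r}) where A₁ is a p×p nonsingular diagonal matrix, and let B = [[𝓑₁, 0, 𝓑₂],[0, 𝓑₃, 0],[𝓑₂ᵀ, 0, 0]] where 𝓑₁ is p×p symmetric, 𝓑₃ is a q×q nonsingular diagonal matrix and 𝓑₂ is p×r. Then A and B are simultaneously diagonalizable via congruence if and only if A₁⁻¹𝓑₁ is diagonalizable over ℝ and 𝓑₂ = 0 (or r = 0). -/

import Mathlib

open Matrix

variable {n : Type*} [Fintype n] [DecidableEq n]

private noncomputable def fibJ (d : n → ℝ) (v : ℝ) : Matrix n {i : n // d i = v} ℝ :=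
  Matrix.of fun i a => if i = (a : n) then (1:ℝ) else 0

private lemma fibJ_sandwich (d : n → ℝ) (v w : ℝ) (Y : Matrix n n ℝ) :
    (fibJ d v)ᵀ * Y * fibJ d w = Y.submatrix Subtype.val Subtype.val := by
  ext a b
  simp [fibJ, mul_apply, transpose_apply, ite_mul, mul_ite, Finset.sum_ite_eq,
    Finset.sum_ite_eq']

private lemma fibJ_tmul (d : n → ℝ) (v w : ℝ) :
    (fibJ d v)ᵀ * fibJ d w = (1 : Matrix n n ℝ).submatrix Subtype.val Subtype.val := by
  have := fibJ_sandwich d v w 1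
  rwa [Matrix.mul_one] at this

private lemma fibJ_tmul_self (d : n → ℝ) (v : ℝ) :
    (fibJ d v)ᵀ * fibJ d v = 1 := by
  rw [fibJ_tmul, submatrix_one _ Subtype.val_injective]

private lemma fibJ_tmul_ne (d : n → ℝ) {v w : ℝ} (h : v ≠ w) :
    (fibJ d v)ᵀ * fibJ d w = 0 := by
  rw [fibJ_tmul]
  ext a b
  have : (a : n) ≠ (b : n) := by
    intro he
    exact h (a.2.symm.trans (he ▸ b.2))
  simp [one_apply, this]

private lemma fibJ_off (d : n → ℝ) (v : ℝ) (X : Matrix {i : n // d i = v} {i : n // d i = v} ℝ)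
    {i j : n} (h : ¬ (d i = v ∧ d j = v)) :
    (fibJ d v * X * (fibJ d v)ᵀ) i j = 0 := by
  simp only [mul_apply, transpose_apply, fibJ, of_apply]
  refine Finset.sum_eq_zero fun b _ => ?_
  rcases Classical.em (d j = v) with hj | hj
  · refine mul_eq_zero_of_left (Finset.sum_eq_zero fun a _ => ?_) _
    have hi : d i ≠ v := fun hi => h ⟨hi, hj⟩
    have : i ≠ (a : n) := fun he => hi (he ▸ a.2)
    simp [this]
  · have : j ≠ (b : n) := fun he => hj (he ▸ b.2)
    simp [this]

private lemma fibJ_diag_isDiag (d : n → ℝ) (v : ℝ) (f : {i : n // d i = v} → ℝ)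
    {i j : n} (h : i ≠ j) :
    (fibJ d v * diagonal f * (fibJ d v)ᵀ) i j = 0 := by
  simp only [mul_apply, transpose_apply, fibJ, of_apply]
  refine Finset.sum_eq_zero fun b _ => ?_
  rcases Classical.em (j = (b : n)) with hj | hj
  · refine mul_eq_zero_of_left (Finset.sum_eq_zero fun a _ => ?_) _
    rcases Classical.em (i = (a : n)) with hi | hi
    · have hab : a ≠ b := fun he => h (by rw [hi, he, hj])
      simp [diagonal_apply_ne _ hab]
    · simp [hi]
  · simp [hj]

example : True := trivial

private lemma fibJ_mul_t (d : n → ℝ) (v : ℝ) (i j : n) :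
    (fibJ d v * (fibJ d v)ᵀ) i j = if i = j ∧ d i = v then 1 else 0 := by
  simp only [mul_apply, transpose_apply, fibJ, of_apply]
  by_cases hij : i = j
  · subst hij
    by_cases hv : d i = v
    · rw [if_pos ⟨rfl, hv⟩, Finset.sum_eq_single (⟨i, hv⟩ : {k // d k = v})]
      · simp
      · intro b _ hb
        have : i ≠ (b : n) := fun he => hb (Subtype.ext he.symm)
        simp [this]
      · simp
    · rw [if_neg (by tauto)]
      refine Finset.sum_eq_zero fun a _ => ?_
      have : i ≠ (a : n) := fun he => hv (he ▸ a.2)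
      simp [this]
  · rw [if_neg (by tauto)]
    refine Finset.sum_eq_zero fun a _ => ?_
    rcases Classical.em (i = (a : n)) with hi | hi
    · have : j ≠ (a : n) := fun he => hij (hi.trans he.symm)
      simp [this]
    · simp [hi]

private lemma fibJ_sum_one (d : n → ℝ) :
    ∑ v ∈ Finset.image d Finset.univ, fibJ d v * (fibJ d v)ᵀ = 1 := by
  ext i j
  rw [Matrix.sum_apply]
  by_cases hij : i = j
  · subst hij
    rw [Finset.sum_congr rfl fun v _ => fibJ_mul_t d v i i]
    simp only [true_and]
    rw [Finset.sum_congr rfl fun v hv => (by simp [eq_comm] :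
        (if d i = v then (1:ℝ) else 0) = if v = d i then 1 else 0)]
    rw [Finset.sum_ite_eq' (Finset.image d Finset.univ) (d i) (fun _ => (1:ℝ))]
    simp [one_apply]
  · rw [Finset.sum_congr rfl fun v _ => fibJ_mul_t d v i j]
    simp [hij, one_apply]

private lemma specpair (M : Matrix n n ℝ) (d : n → ℝ) (hM : M.IsSymm)
    (hMd : ∀ i j, d i ≠ d j → M i j = 0) :
    ∃ R : Matrix n n ℝ, Rᵀ * R = 1 ∧ (Rᵀ * M * R).IsDiag ∧
      ∀ i j, d i ≠ d j → R i j = 0 := by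
  classical
  have hHerm : ∀ v : ℝ,
      (M.submatrix (Subtype.val : {i // d i = v} → n) Subtype.val).IsHermitian := by
    intro v
    rw [IsHermitian, conjTranspose_eq_transpose_of_trivial]
    ext a b
    exact hM.apply _ _
  have hUex : ∀ v : ℝ, ∃ (U : Matrix {i : n // d i = v} {i : n // d i = v} ℝ)
      (f : {i : n // d i = v} → ℝ),
      Uᵀ * U = (1 : Matrix {i : n // d i = v} {i : n // d i = v} ℝ) ∧
      Uᵀ * (M.submatrix Subtype.val Subtype.val) * U = diagonal f := by
    intro v
    refine ⟨(Matrix.IsHermitian.eigenvectorUnitary (hHerm v) : Matrix {i : n // d i = v} {i : n // d i = v} ℝ),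
      RCLike.ofReal ∘ (hHerm v).eigenvalues, ?_, ?_⟩
    · have := mem_unitaryGroup_iff'.mp (Matrix.IsHermitian.eigenvectorUnitary (hHerm v)).2
      rwa [star_eq_conjTranspose, conjTranspose_eq_transpose_of_trivial] at this
    · have hone : (Matrix.IsHermitian.eigenvectorUnitary (hHerm v) : Matrix {i : n // d i = v} {i : n // d i = v} ℝ)ᵀ *
          (Matrix.IsHermitian.eigenvectorUnitary (hHerm v) : Matrix {i : n // d i = v} {i : n // d i = v} ℝ)
          = (1 : Matrix {i : n // d i = v} {i : n // d i = v} ℝ) := by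
        have := mem_unitaryGroup_iff'.mp (Matrix.IsHermitian.eigenvectorUnitary (hHerm v)).2
        rwa [star_eq_conjTranspose, conjTranspose_eq_transpose_of_trivial] at this
      have hst := (hHerm v).spectral_theorem
      rw [Unitary.conjStarAlgAut_apply, star_eq_conjTranspose, conjTranspose_eq_transpose_of_trivial] at hst
      set W : Matrix {i : n // d i = v} {i : n // d i = v} ℝ :=
        (Matrix.IsHermitian.eigenvectorUnitary (hHerm v) : Matrix {i : n // d i = v} {i : n // d i = v} ℝ) with hW
      have h2 : Wᵀ * (W * diagonal (RCLike.ofReal ∘ (hHerm v).eigenvalues) * Wᵀ) * W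
          = diagonal (RCLike.ofReal ∘ (hHerm v).eigenvalues) := by
        calc Wᵀ * (W * diagonal (RCLike.ofReal ∘ (hHerm v).eigenvalues) * Wᵀ) * W
            = Wᵀ * (W * (diagonal (RCLike.ofReal ∘ (hHerm v).eigenvalues) * (Wᵀ * W))) := by
              simp only [Matrix.mul_assoc]
          _ = diagonal (RCLike.ofReal ∘ (hHerm v).eigenvalues) := by
              rw [hone, Matrix.mul_one, ← Matrix.mul_assoc, hone, Matrix.one_mul]
      rw [← hst] at h2
      exact h2
  choose U f hUU hf using hUex
  set V := Finset.image d Finset.univ with hV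
  set R := ∑ v ∈ V, fibJ d v * U v * (fibJ d v)ᵀ with hR
  have hRT : Rᵀ = ∑ v ∈ V, fibJ d v * (U v)ᵀ * (fibJ d v)ᵀ := by
    rw [hR, transpose_sum]
    exact Finset.sum_congr rfl fun v _ => by simp [Matrix.mul_assoc]
  have hterm : ∀ (N : Matrix n n ℝ) (v w : ℝ)
      (X : Matrix {i : n // d i = v} {i : n // d i = v} ℝ)
      (Y : Matrix {i : n // d i = w} {i : n // d i = w} ℝ),
      (fibJ d v * X * (fibJ d v)ᵀ) * N * (fibJ d w * Y * (fibJ d w)ᵀ)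
        = fibJ d v * (X * (((fibJ d v)ᵀ * N * fibJ d w) * Y)) * (fibJ d w)ᵀ := by
    intros; simp only [Matrix.mul_assoc]
  have hmain : ∀ (N : Matrix n n ℝ), (∀ v w, v ≠ w → (fibJ d v)ᵀ * N * fibJ d w = 0) →
      Rᵀ * N * R = ∑ v ∈ V,
        fibJ d v * ((U v)ᵀ * (((fibJ d v)ᵀ * N * fibJ d v) * U v)) * (fibJ d v)ᵀ := by
    intro N hN
    rw [hRT, hR, Finset.sum_mul, Finset.sum_mul_sum]
    refine Finset.sum_congr rfl fun v hv => ?_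
    rw [Finset.sum_eq_single_of_mem v hv]
    · rw [hterm]
    · intro w _ hwv
      rw [hterm, hN v w (Ne.symm hwv)]
      simp
  have hRtR : Rᵀ * R = 1 := by
    have h1 := hmain 1 (fun v w h => by rw [Matrix.mul_one, fibJ_tmul_ne d h])
    rw [Matrix.mul_one] at h1
    rw [h1, Finset.sum_congr rfl fun v _ => ?_]
    · exact fibJ_sum_one d
    · rw [Matrix.mul_one, fibJ_tmul_self, Matrix.one_mul, hUU v, Matrix.mul_one]
  have hMsub : ∀ v w, v ≠ w → (fibJ d v)ᵀ * M * fibJ d w = 0 := by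
    intro v w hvw
    rw [fibJ_sandwich]
    ext a b
    exact hMd _ _ (by rw [a.2, b.2]; exact hvw)
  refine ⟨R, hRtR, ?_, ?_⟩
  · rw [hmain M hMsub, Finset.sum_congr rfl fun v _ => (by
      have hfv := hf v
      rw [Matrix.mul_assoc] at hfv
      rw [fibJ_sandwich, hfv] :
        fibJ d v * ((U v)ᵀ * (((fibJ d v)ᵀ * M * fibJ d v) * U v)) * (fibJ d v)ᵀ
          = fibJ d v * diagonal (f v) * (fibJ d v)ᵀ)]
    intro i j hij
    rw [Matrix.sum_apply]
    exact Finset.sum_eq_zero fun v _ => fibJ_diag_isDiag d v (f v) hij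
  · intro i j hij
    rw [hR, Matrix.sum_apply]
    refine Finset.sum_eq_zero fun v _ => fibJ_off d v (U v) ?_
    rintro ⟨h1, h2⟩
    exact hij (h1.trans h2.symm)

theorem stmt_6 (p q r : ℕ)
    (A₁ : Matrix (Fin p) (Fin p) ℝ) (hA₁d : A₁.IsDiag) (hA₁ : IsUnit A₁)
    (B₁ : Matrix (Fin p) (Fin p) ℝ) (hB₁s : B₁.IsSymm)
    (B₂ : Matrix (Fin p) (Fin r) ℝ)
    (B₃ : Matrix (Fin q) (Fin q) ℝ) (hB₃d : B₃.IsDiag) (hB₃ : IsUnit B₃)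
    (A B : Matrix (Fin p ⊕ (Fin q ⊕ Fin r)) (Fin p ⊕ (Fin q ⊕ Fin r)) ℝ)
    (hA : A = fromBlocks A₁ 0 0 0)
    (hB : B = fromBlocks B₁ (fromCols 0 B₂) (fromRows 0 B₂ᵀ)
        (fromBlocks B₃ 0 0 0)) :
    (∃ P : Matrix (Fin p ⊕ (Fin q ⊕ Fin r)) (Fin p ⊕ (Fin q ⊕ Fin r)) ℝ,
        IsUnit P ∧ (Pᵀ * A * P).IsDiag ∧ (Pᵀ * B * P).IsDiag) ↔
      ((∃ (Q D : Matrix (Fin p) (Fin p) ℝ), IsUnit Q ∧ D.IsDiag ∧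
          Q⁻¹ * (A₁⁻¹ * B₁) * Q = D) ∧ (B₂ = 0 ∨ r = 0)) := by
  have hA₁det : IsUnit A₁.det := (isUnit_iff_isUnit_det A₁).mp hA₁
  have hB₃det : IsUnit B₃.det := (isUnit_iff_isUnit_det B₃).mp hB₃
  constructor
  · rintro ⟨P, hPu, hDA, hDB⟩
    classical
    have hPdet : IsUnit P.det := (isUnit_iff_isUnit_det P).mp hPu
    have hPtdet : IsUnit Pᵀ.det := by rwa [det_transpose]
    set dA : (Fin p ⊕ (Fin q ⊕ Fin r)) → ℝ := (Pᵀ * A * P).diag with hdA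
    set dB : (Fin p ⊕ (Fin q ⊕ Fin r)) → ℝ := (Pᵀ * B * P).diag with hdB
    have hDAeq : Pᵀ * A * P = diagonal dA := hDA.diagonal_diag.symm
    have hDBeq : Pᵀ * B * P = diagonal dB := hDB.diagonal_diag.symm
    have hconj : ∀ (N : Matrix _ _ ℝ) (x : (Fin p ⊕ (Fin q ⊕ Fin r)) → ℝ),
        (Pᵀ * N * P) *ᵥ (P⁻¹ *ᵥ x) = Pᵀ *ᵥ (N *ᵥ x) := by
      intro N x
      rw [mulVec_mulVec, mulVec_mulVec, Matrix.mul_assoc (Pᵀ * N), mul_nonsing_inv P hPdet,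
        Matrix.mul_one]
    have hKer : ∀ x, A *ᵥ x = 0 → ∀ i, dA i ≠ 0 → (P⁻¹ *ᵥ x) i = 0 := by
      intro x hx i hi
      have h1 : diagonal dA *ᵥ (P⁻¹ *ᵥ x) = 0 := by
        rw [← hDAeq, hconj A x, hx, mulVec_zero]
      have h2 := congrFun h1 i
      rw [mulVec_diagonal] at h2
      exact (mul_eq_zero.mp h2).resolve_left hi
    have hPB : ∀ x, Pᵀ *ᵥ (B *ᵥ x) = diagonal dB *ᵥ (P⁻¹ *ᵥ x) := fun x => by
      rw [← hDBeq, hconj B x]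
    have hcancelT : ∀ y : (Fin p ⊕ (Fin q ⊕ Fin r)) → ℝ, Pᵀ *ᵥ y = 0 → y = 0 := by
      intro y hy
      have h := congrArg (fun v => (Pᵀ)⁻¹ *ᵥ v) hy
      simpa only [mulVec_mulVec, nonsing_inv_mul _ hPtdet, one_mulVec, mulVec_zero] using h
    have hB0 : ∀ x w, A *ᵥ x = 0 → B *ᵥ x = A *ᵥ w → B *ᵥ x = 0 := by
      intro x w hx hxw
      have hPBx : Pᵀ *ᵥ (B *ᵥ x) = 0 := by
        rw [hPB x]
        ext i
        simp only [Pi.zero_apply, mulVec_diagonal]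
        rcases Classical.em (dA i = 0) with h0 | h0
        · have h2 : diagonal dA *ᵥ (P⁻¹ *ᵥ w) = diagonal dB *ᵥ (P⁻¹ *ᵥ x) := by
            rw [← hDAeq, ← hDBeq, hconj, hconj, hxw]
          have h3 := (congrFun h2 i).symm
          rw [mulVec_diagonal, mulVec_diagonal, h0, zero_mul] at h3
          exact h3
        · rw [hKer x hx i h0, mul_zero]
      exact hcancelT _ hPBx
    have hAx0 : ∀ (y : Fin q → ℝ) (z : Fin r → ℝ),
        A *ᵥ (Sum.elim 0 (Sum.elim y z)) = 0 := by
      intro y z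
      rw [hA, fromBlocks_mulVec]
      ext (i | i) <;> simp
    have hB₂0 : B₂ = 0 := by
      have hz : ∀ z : Fin r → ℝ, B₂ *ᵥ z = 0 := by
        intro z
        have hBx : B *ᵥ (Sum.elim 0 (Sum.elim 0 z)) = Sum.elim (B₂ *ᵥ z) 0 := by
          rw [hB, fromBlocks_mulVec]
          ext x
          rcases x with i | i | i <;>
            simp [fromCols_mulVec_sumElim, fromBlocks_mulVec]
        have hAw : A *ᵥ (Sum.elim (A₁⁻¹ *ᵥ (B₂ *ᵥ z)) 0) = Sum.elim (B₂ *ᵥ z) 0 := by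
          rw [hA, fromBlocks_mulVec]
          ext x
          rcases x with i | i | i <;>
            simp [mulVec_mulVec, ← Matrix.mul_assoc, mul_nonsing_inv _ hA₁det]
        have h6 := hB0 (Sum.elim 0 (Sum.elim 0 z)) (Sum.elim (A₁⁻¹ *ᵥ (B₂ *ᵥ z)) 0)
          (hAx0 0 z) (by rw [hBx, hAw])
        rw [hBx] at h6
        exact funext fun i => congrFun h6 (Sum.inl i)
      ext i j
      have h7 := congrFun (hz (Pi.single j 1)) i
      rw [mulVec_single] at h7
      simpa using h7
    set J : Matrix (Fin p ⊕ (Fin q ⊕ Fin r)) (Fin p) ℝ := fromRows 1 0 with hJ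
    have hfac : A = J * A₁ * Jᵀ := by
      rw [hA, hJ]
      ext x y
      rcases x with a | a <;> rcases y with b | b <;>
        simp [mul_apply, fromRows_apply_inl, fromRows_apply_inr, transpose_apply, one_apply,
          Fintype.sum_sum_type, ite_mul, mul_ite]
    have hJJ : Jᵀ * J = 1 := by
      rw [hJ]
      simp only [transpose_fromRows, transpose_one, transpose_zero,
        fromCols_mul_fromRows, Matrix.one_mul, Matrix.zero_mul, add_zero]
    have hrankA : A.rank = p := by
      have hle1 : A.rank ≤ A₁.rank := by
        rw [hfac]
        exact le_trans (rank_mul_le_left _ _) (rank_mul_le_right _ _)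
      have hback : A₁ = Jᵀ * A * J := by
        rw [hfac, show Jᵀ * (J * A₁ * Jᵀ) * J = (Jᵀ * J) * A₁ * (Jᵀ * J) by
          simp only [Matrix.mul_assoc], hJJ, Matrix.one_mul, Matrix.mul_one]
      have hle2 : A₁.rank ≤ A.rank := by
        conv_lhs => rw [hback]
        exact le_trans (rank_mul_le_left _ _) (rank_mul_le_right _ _)
      have h3 : A₁.rank = p := by rw [rank_of_isUnit A₁ hA₁, Fintype.card_fin]
      omega
    have hcard : Fintype.card (Fin p) = Fintype.card {i // dA i ≠ 0} := by
      have hr1 : (Pᵀ * A * P).rank = A.rank := by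
        rw [rank_mul_eq_left_of_isUnit_det P (Pᵀ * A) hPdet,
          rank_mul_eq_right_of_isUnit_det Pᵀ A hPtdet]
      rw [hDAeq, rank_diagonal] at hr1
      rw [Fintype.card_fin, hr1, hrankA]
    set e : Fin p ≃ {i // dA i ≠ 0} := Fintype.equivOfCardEq hcard with heq
    set ee : Fin p → (Fin p ⊕ (Fin q ⊕ Fin r)) := fun k => (e k).1 with heedef
    have hee_inj : Function.Injective ee := by
      intro k l h
      exact e.injective (Subtype.ext h)
    have hee_ne : ∀ k, dA (ee k) ≠ 0 := fun k => (e k).2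
    have hyv : ∀ i, dA i ≠ 0 → ∀ a : Fin q, P (Sum.inr (Sum.inl a)) i = 0 := by
      intro i hi a
      set η : Fin q → ℝ := B₃⁻¹ *ᵥ Pi.single a 1 with hη
      have hB₃η : B₃ *ᵥ η = Pi.single a 1 := by
        rw [hη, mulVec_mulVec, mul_nonsing_inv _ hB₃det, one_mulVec]
      have hBk : B *ᵥ (Sum.elim 0 (Sum.elim η 0))
          = Sum.elim (0 : Fin p → ℝ) (Sum.elim (Pi.single a (1:ℝ)) (0 : Fin r → ℝ)) := by
        rw [hB, fromBlocks_mulVec]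
        ext x
        rcases x with u | u | u <;>
          simp [fromCols_mulVec_sumElim, fromBlocks_mulVec, hB₃η]
      have h7 : (Pᵀ *ᵥ (B *ᵥ (Sum.elim 0 (Sum.elim η 0)))) i = 0 := by
        have h8 : (P⁻¹ *ᵥ (Sum.elim 0 (Sum.elim η 0))) i = 0 := hKer _ (hAx0 η 0) i hi
        rw [hPB, mulVec_diagonal, h8, mul_zero]
      rw [hBk] at h7
      simpa [mulVec, dotProduct, Fintype.sum_sum_type, Pi.single_apply, mul_ite] using h7
    set K : Matrix (Fin p ⊕ (Fin q ⊕ Fin r)) (Fin p) ℝ := P.submatrix id ee with hK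
    have hKN : ∀ N : Matrix (Fin p ⊕ (Fin q ⊕ Fin r)) (Fin p ⊕ (Fin q ⊕ Fin r)) ℝ,
        Kᵀ * N * K = (Pᵀ * N * P).submatrix ee ee := by
      intro N
      ext k l
      simp [hK, mul_apply, submatrix_apply, transpose_apply]
    set S : Matrix (Fin p) (Fin p) ℝ := Jᵀ * K with hSdef
    have hJK : Kᵀ * (J * A₁ * Jᵀ) * K = Sᵀ * A₁ * S := by
      rw [hSdef, transpose_mul, transpose_transpose]
      simp only [Matrix.mul_assoc]
    have hSA_eq : Sᵀ * A₁ * S = diagonal (fun k => dA (ee k)) := by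
      rw [← hJK, ← hfac, hKN A, hDAeq]
      ext k l
      rcases Classical.em (k = l) with hkl | hkl
      · subst hkl
        simp [submatrix_apply, diagonal_apply_eq]
      · rw [submatrix_apply, diagonal_apply_ne _ (fun h => hkl (hee_inj h)),
          diagonal_apply_ne _ hkl]
    -- second embedding
    set J₂ : Matrix (Fin p ⊕ (Fin q ⊕ Fin r)) (Fin q) ℝ :=
      fromRows 0 (fromRows 1 0) with hJ₂
    have hBsum : B = J * B₁ * Jᵀ + J₂ * B₃ * J₂ᵀ := by
      rw [hB, hB₂0, hJ, hJ₂]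
      ext x y
      rcases x with a | a | a <;> rcases y with b | b | b <;>
        simp [mul_apply, fromRows_apply_inl, fromRows_apply_inr, transpose_apply, one_apply,
          Fintype.sum_sum_type, ite_mul, mul_ite]
    have hJ₂K : J₂ᵀ * K = 0 := by
      ext u k
      simp only [mul_apply, Matrix.zero_apply, transpose_apply]
      refine Finset.sum_eq_zero fun x _ => ?_
      rcases x with a | v | v
      · simp [hJ₂, fromRows_apply_inl]
      · rcases Classical.em (v = u) with hvu | hvu
        · subst hvu
          simp [hJ₂, hK, fromRows_apply_inr, fromRows_apply_inl, one_apply,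
            hyv (ee k) (hee_ne k) v]
        · simp [hJ₂, fromRows_apply_inr, fromRows_apply_inl, one_apply, hvu]
      · simp [hJ₂, fromRows_apply_inr]
    have hSB_eq : Sᵀ * B₁ * S = diagonal (fun k => dB (ee k)) := by
      have h10 : Kᵀ * B * K = Sᵀ * B₁ * S := by
        rw [hBsum, Matrix.mul_add, Matrix.add_mul, hSdef, transpose_mul, transpose_transpose]
        have h11 : Kᵀ * (J₂ * B₃ * J₂ᵀ) * K = 0 := by
          calc Kᵀ * (J₂ * B₃ * J₂ᵀ) * K = (J₂ᵀ * K)ᵀ * B₃ * (J₂ᵀ * K) := by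
                rw [transpose_mul, transpose_transpose]
                simp only [Matrix.mul_assoc]
            _ = 0 := by rw [hJ₂K]; simp
        rw [h11, add_zero]
        simp only [Matrix.mul_assoc]
      rw [← h10, hKN B, hDBeq]
      ext k l
      rcases Classical.em (k = l) with hkl | hkl
      · subst hkl
        simp [submatrix_apply, diagonal_apply_eq]
      · rw [submatrix_apply, diagonal_apply_ne _ (fun h => hkl (hee_inj h)),
          diagonal_apply_ne _ hkl]
    have hSdet : IsUnit S.det := by
      have h12 := congrArg det hSA_eq
      rw [det_mul, det_mul, det_transpose, det_diagonal] at h12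
      have h13 : (∏ k, dA (ee k)) ≠ 0 :=
        Finset.prod_ne_zero_iff.mpr fun k _ => hee_ne k
      rw [← h12] at h13
      have hSne : S.det ≠ 0 := by
        intro h
        rw [h] at h13
        simp at h13
      exact isUnit_iff_ne_zero.mpr hSne
    have hSu : IsUnit S := (isUnit_iff_isUnit_det S).mpr hSdet
    refine ⟨⟨S, diagonal (fun k => (dA (ee k))⁻¹ * dB (ee k)), hSu, isDiag_diagonal _, ?_⟩,
      Or.inl hB₂0⟩
    have hStdet : IsUnit Sᵀ.det := by rwa [det_transpose]
    have hBS : B₁ * S = A₁ * S * diagonal (fun k => (dA (ee k))⁻¹ * dB (ee k)) := by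
      have hcan : Sᵀ * (B₁ * S) = Sᵀ * (A₁ * S * diagonal (fun k => (dA (ee k))⁻¹ * dB (ee k))) := by
        calc Sᵀ * (B₁ * S) = diagonal (fun k => dB (ee k)) := by
              rw [← Matrix.mul_assoc]; exact hSB_eq
          _ = diagonal (fun k => dA (ee k)) * diagonal (fun k => (dA (ee k))⁻¹ * dB (ee k)) := by
              rw [diagonal_mul_diagonal]
              refine congrArg diagonal (funext fun k => ?_)
              exact (by rw [← mul_assoc, mul_inv_cancel₀ (hee_ne k), one_mul] :
                dA (ee k) * ((dA (ee k))⁻¹ * dB (ee k)) = dB (ee k)).symm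
          _ = Sᵀ * (A₁ * S * diagonal (fun k => (dA (ee k))⁻¹ * dB (ee k))) := by
              rw [← hSA_eq]; simp only [Matrix.mul_assoc]
      have h14 := congrArg (fun X => (Sᵀ)⁻¹ * X) hcan
      simpa only [← Matrix.mul_assoc, nonsing_inv_mul _ hStdet, Matrix.one_mul] using h14
    calc S⁻¹ * (A₁⁻¹ * B₁) * S = S⁻¹ * (A₁⁻¹ * (B₁ * S)) := by simp only [Matrix.mul_assoc]
      _ = S⁻¹ * (A₁⁻¹ * (A₁ * (S * diagonal (fun k => (dA (ee k))⁻¹ * dB (ee k))))) := by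
          rw [hBS]; simp only [Matrix.mul_assoc]
      _ = S⁻¹ * (S * diagonal (fun k => (dA (ee k))⁻¹ * dB (ee k))) := by
          rw [← Matrix.mul_assoc A₁⁻¹, nonsing_inv_mul _ hA₁det, Matrix.one_mul]
      _ = diagonal (fun k => (dA (ee k))⁻¹ * dB (ee k)) := by
          rw [← Matrix.mul_assoc, nonsing_inv_mul _ hSdet, Matrix.one_mul]
  · rintro ⟨⟨Q, D, hQu, hDd, hQD⟩, hB2⟩
    have hB₂0 : B₂ = 0 := by
      rcases hB2 with h | h
      · exact h
      · ext i j
        exact absurd j.isLt (by omega)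
    have hQdet : IsUnit Q.det := (isUnit_iff_isUnit_det Q).mp hQu
    set d : Fin p → ℝ := D.diag with hd
    have hDdiag : D = diagonal d := hDd.diagonal_diag.symm
    set M := Qᵀ * A₁ * Q with hM
    have hMsymm : M.IsSymm := by
      show Mᵀ = M
      rw [hM]
      simp only [transpose_mul, transpose_transpose, hA₁d.isSymm.eq, Matrix.mul_assoc]
    have h2 : Q * (Q⁻¹ * (A₁⁻¹ * B₁) * Q) * Q⁻¹ = A₁⁻¹ * B₁ := by
      rw [show Q * (Q⁻¹ * (A₁⁻¹ * B₁) * Q) * Q⁻¹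
          = (Q * Q⁻¹) * (A₁⁻¹ * B₁) * (Q * Q⁻¹) by simp only [Matrix.mul_assoc],
        mul_nonsing_inv Q hQdet, Matrix.one_mul, Matrix.mul_one]
    have h1 : A₁⁻¹ * B₁ = Q * D * Q⁻¹ := by rw [← h2, hQD]
    have hB₁eq : B₁ = A₁ * (Q * D * Q⁻¹) := by
      rw [← h1, ← Matrix.mul_assoc, mul_nonsing_inv A₁ hA₁det, Matrix.one_mul]
    have hMD : M * D = Qᵀ * B₁ * Q := by
      rw [hB₁eq, hM]
      simp only [Matrix.mul_assoc]
      rw [nonsing_inv_mul Q hQdet, Matrix.mul_one]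
    have hMDsymm : (M * D)ᵀ = M * D := by
      rw [hMD]
      simp only [transpose_mul, transpose_transpose, hB₁s.eq, Matrix.mul_assoc]
    have hcomm : ∀ i j, d i ≠ d j → M i j = 0 := by
      intro i j hij
      rw [hDdiag] at hMDsymm
      have h3 : M * diagonal d = diagonal d * M := by
        rw [← hMDsymm, transpose_mul, diagonal_transpose, hMsymm.eq]
      have h4 := congrFun (congrFun h3 i) j
      rw [Matrix.mul_diagonal, Matrix.diagonal_mul] at h4
      by_contra hne
      exact hij (mul_left_cancel₀ hne (h4.trans (mul_comm _ _))).symm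
    obtain ⟨R, hRR, hRMR, hRsupp⟩ := specpair M d hMsymm hcomm
    have hRu : IsUnit R := by
      apply (isUnit_iff_isUnit_det R).mpr
      have := congrArg det hRR
      rw [det_mul, det_transpose, det_one] at this
      exact IsUnit.of_mul_eq_one _ this
    have hRD : R * diagonal d = diagonal d * R := by
      ext i j
      rw [Matrix.mul_diagonal, Matrix.diagonal_mul]
      rcases Classical.em (d i = d j) with h | h
      · rw [h, mul_comm]
      · simp [hRsupp i j h]
    set S := Q * R with hS
    have hSdet : IsUnit S.det := by
      rw [hS, det_mul]
      exact hQdet.mul ((isUnit_iff_isUnit_det R).mp hRu)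
    have hSA : Sᵀ * A₁ * S = Rᵀ * M * R := by
      rw [hS, hM]; simp only [transpose_mul, Matrix.mul_assoc]
    have hSB : Sᵀ * B₁ * S = (Rᵀ * M * R) * diagonal d := by
      have h5 : Qᵀ * B₁ * Q = M * diagonal d := by rw [← hMD, hDdiag]
      calc Sᵀ * B₁ * S = Rᵀ * (Qᵀ * B₁ * Q * R) := by
            rw [hS]; simp only [transpose_mul, Matrix.mul_assoc]
        _ = Rᵀ * (M * (diagonal d * R)) := by rw [h5]; simp only [Matrix.mul_assoc]
        _ = Rᵀ * (M * (R * diagonal d)) := by rw [← hRD]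
        _ = (Rᵀ * M * R) * diagonal d := by simp only [Matrix.mul_assoc]
    refine ⟨fromBlocks S 0 0 (1 : Matrix (Fin q ⊕ Fin r) (Fin q ⊕ Fin r) ℝ), ?_, ?_, ?_⟩
    · apply (isUnit_iff_isUnit_det _).mpr
      rw [det_fromBlocks_zero₂₁, det_one, mul_one]
      exact hSdet
    · have he : (fromBlocks S 0 0 (1 : Matrix (Fin q ⊕ Fin r) (Fin q ⊕ Fin r) ℝ))ᵀ * A
          * fromBlocks S 0 0 1 = fromBlocks (Sᵀ * A₁ * S) 0 0 0 := by
        rw [hA, fromBlocks_transpose, fromBlocks_multiply, fromBlocks_multiply]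
        simp
      rw [he, hSA]
      exact Matrix.IsDiag.fromBlocks hRMR (fun i j _ => rfl)
    · have hBeq : B = fromBlocks B₁ 0 0 (fromBlocks B₃ 0 0 0) := by
        rw [hB, hB₂0]
        simp
      have he : (fromBlocks S 0 0 (1 : Matrix (Fin q ⊕ Fin r) (Fin q ⊕ Fin r) ℝ))ᵀ * B
          * fromBlocks S 0 0 1
          = fromBlocks (Sᵀ * B₁ * S) 0 0 (fromBlocks B₃ 0 0 0) := by
        rw [hBeq, fromBlocks_transpose, fromBlocks_multiply, fromBlocks_multiply]
        simp
      rw [he, hSB]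
      refine Matrix.IsDiag.fromBlocks ?_ (Matrix.IsDiag.fromBlocks hB₃d (fun i j _ => rfl))
      intro i j hij
      rw [Matrix.mul_diagonal, hRMR hij, zero_mul]
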